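/- Let F(x) = f(x) + Σᵢ gᵢ(xᵢ) where f : ℝⁿ → ℝ is differentiable with coordinate-wise L-Lipschitz continuous gradient and μ-strongly convex in the Euclidean norm (0 < μ ≤ L), each gᵢ : ℝ → ℝ is convex, and x* minimizes F. Define Vᵢ(x, d) = ∇ᵢf(x)·d + (L/2)d² + gᵢ(xᵢ + d) − gᵢ(xᵢ). If i_k is chosen by the GS-q rule i_k ∈ argmin_i { min_d Vᵢ(x^k, d) } and x^{k+1} = x^k + d_{i_k} e_{i_k} where d_{i_k} ∈ argmin_d V_{i_k}(x^k, d), then F(x^{k+1}) − F(x*) ≤ (1 − μ/(nL))(F(x^k) − F(x*)). -/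

import Mathlib

open scoped RealInnerProductSpace

/-- 1-D descent lemma: if `φ` has derivative `φd` which is Lipschitz-controlled
relative to `0`, then `φ` is bounded above by its quadratic upper model. -/
lemma descent1d (φ φd : ℝ → ℝ) (hφ : ∀ t, HasDerivAt φ (φd t) t) (L : ℝ) (hL : 0 ≤ L)
    (hlip : ∀ t, |φd t - φd 0| ≤ L * |t|) (a : ℝ) :
    φ a ≤ φ 0 + φd 0 * a + L / 2 * a ^ 2 := by
  set ψ : ℝ → ℝ := fun t => φ 0 + φd 0 * t + L / 2 * t ^ 2 - φ t with hψdef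
  have hψ : ∀ t, HasDerivAt ψ (φd 0 + L * t - φd t) t := by
    intro t
    have h1 : HasDerivAt (fun t : ℝ => φ 0 + φd 0 * t + L / 2 * t ^ 2)
        (φd 0 + L * t) t := by
      have := ((hasDerivAt_id t).const_mul (φd 0)).const_add (φ 0)
      have h2 := (((hasDerivAt_id t).pow 2).const_mul (L / 2))
      refine (this.add h2).congr_deriv ?_
      simp
      ring
    exact h1.sub (hφ t)
  have hψ0 : ψ 0 = 0 := by simp [hψdef]
  have key : (0:ℝ) ≤ ψ a := by
    rcases le_or_gt 0 a with ha | ha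
    · have mono : MonotoneOn ψ (Set.Ici (0:ℝ)) := by
        apply monotoneOn_of_deriv_nonneg (convex_Ici 0)
        · exact fun t _ => ((hψ t).continuousAt).continuousWithinAt
        · exact fun t _ => ((hψ t).differentiableAt).differentiableWithinAt
        · intro t ht
          rw [interior_Ici] at ht
          rw [(hψ t).deriv]
          have := (abs_le.mp (hlip t)).2
          have habs : |t| = t := abs_of_pos ht
          nlinarith [(Set.mem_Ioi.mp ht).le]
      have := mono (Set.self_mem_Ici) (Set.mem_Ici.mpr ha) ha
      linarith [hψ0 ▸ this]
    · have anti : AntitoneOn ψ (Set.Iic (0:ℝ)) := by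
        apply antitoneOn_of_deriv_nonpos (convex_Iic 0)
        · exact fun t _ => ((hψ t).continuousAt).continuousWithinAt
        · exact fun t _ => ((hψ t).differentiableAt).differentiableWithinAt
        · intro t ht
          rw [interior_Iic] at ht
          rw [(hψ t).deriv]
          have := (abs_le.mp (hlip t)).1
          have habs : |t| = -t := abs_of_neg ht
          nlinarith [Set.mem_Iio.mp ht]
      have := anti (Set.mem_Iic.mpr ha.le) (Set.self_mem_Iic) ha.le
      linarith [hψ0 ▸ this]
  simp only [hψdef] at key
  linarith

set_option maxHeartbeats 1000000 in
/-- the proximal Gauss-Southwell GS-q rule attains at least the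
rate of randomized proximal coordinate descent, `(1 − μ/(nL))`. -/
theorem proximal_gs_q_rate {n : ℕ}
    (f : EuclideanSpace ℝ (Fin n) → ℝ)
    (f' : EuclideanSpace ℝ (Fin n) → EuclideanSpace ℝ (Fin n))
    (hf : ∀ x, HasGradientAt f (f' x) x)
    (L : ℝ) (hL : 0 < L)
    (hlip : ∀ (x : EuclideanSpace ℝ (Fin n)) (α : ℝ) (i : Fin n),
      |f' (x + α • EuclideanSpace.single i 1) i - f' x i| ≤ L * |α|)
    (μ : ℝ) (hμ : 0 < μ) (hμL : μ ≤ L)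
    (hsc : ∀ x y, f y ≥ f x + ⟪f' x, y - x⟫ + μ / 2 * ‖y - x‖ ^ 2)
    (g : Fin n → ℝ → ℝ) (hg : ∀ i, ConvexOn ℝ Set.univ (g i))
    (F : EuclideanSpace ℝ (Fin n) → ℝ)
    (hF : ∀ x, F x = f x + ∑ i, g i (x i))
    (xs : EuclideanSpace ℝ (Fin n)) (hxs : ∀ y, F xs ≤ F y)
    (xk : EuclideanSpace ℝ (Fin n)) (d : Fin n → ℝ)
    (hd : ∀ (i : Fin n) (t : ℝ),
      f' xk i * d i + L / 2 * (d i) ^ 2 + g i (xk i + d i) - g i (xk i)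
        ≤ f' xk i * t + L / 2 * t ^ 2 + g i (xk i + t) - g i (xk i))
    (ik : Fin n)
    (hik : ∀ j : Fin n,
      f' xk ik * d ik + L / 2 * (d ik) ^ 2 + g ik (xk ik + d ik) - g ik (xk ik)
        ≤ f' xk j * d j + L / 2 * (d j) ^ 2 + g j (xk j + d j) - g j (xk j))
    (xk1 : EuclideanSpace ℝ (Fin n))
    (hstep : xk1 = xk + d ik • EuclideanSpace.single ik 1) :
    F xk1 - F xs ≤ (1 - μ / (n * L)) * (F xk - F xs) := by
  have hnpos : 0 < n := ik.pos
  have hn : (0:ℝ) < (n:ℝ) := by exact_mod_cast hnpos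
  set E : EuclideanSpace ℝ (Fin n) := EuclideanSpace.single ik 1 with hE
  -- directional derivative of f along coordinate ik
  have hφ : ∀ t : ℝ, HasDerivAt (fun s : ℝ => f (xk + s • E)) (f' (xk + t • E) ik) t := by
    intro t
    have hc : HasDerivAt (fun s : ℝ => xk + s • E) E t := by
      simpa using ((hasDerivAt_id t).smul_const E).const_add xk
    have h := ((hf (xk + t • E)).hasFDerivAt).comp_hasDerivAt t hc
    have hval : (InnerProductSpace.toDual ℝ (EuclideanSpace ℝ (Fin n))
        (f' (xk + t • E))) E = f' (xk + t • E) ik := by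
      simp [hE, InnerProductSpace.toDual_apply_apply, EuclideanSpace.inner_single_right]
    rw [hval] at h
    exact h
  have hzero : xk + (0:ℝ) • E = xk := by simp
  -- coordinate descent lemma for f
  have key : ∀ a : ℝ, f (xk + a • E) ≤ f xk + f' xk ik * a + L / 2 * a ^ 2 := by
    intro a
    have := descent1d (fun s : ℝ => f (xk + s • E)) (fun s : ℝ => f' (xk + s • E) ik)
      hφ L hL.le ?_ a
    · simpa [hzero] using this
    · intro t
      simp only [hzero]
      exact hlip xk t ik
  -- coordinates of a single-coordinate step
  have hcoord : ∀ (a : ℝ) (j : Fin n),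
      (xk + a • E) j = xk j + (if j = ik then a else 0) := by
    intro a j
    have : (xk + a • E) j = xk j + a * E j := rfl
    rw [this, hE, EuclideanSpace.single_apply]
    split <;> simp
  -- the sum of the g's after a single-coordinate step
  have hsumcoord : ∀ a : ℝ, ∑ j, g j ((xk + a • E) j)
      = ∑ j, g j (xk j) + (g ik (xk ik + a) - g ik (xk ik)) := by
    intro a
    have h1 : ∑ j, g j ((xk + a • E) j)
        = ∑ j, (g j (xk j) + if j = ik then g ik (xk ik + a) - g ik (xk ik) else 0) := by
      refine Finset.sum_congr rfl fun j _ => ?_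
      rw [hcoord]
      by_cases hj : j = ik
      · subst hj; simp
      · simp [hj]
    rw [h1, Finset.sum_add_distrib, Finset.sum_ite_eq' Finset.univ ik]
    simp
  -- quadratic upper bound on F after a single-coordinate step
  have FV : ∀ a : ℝ, F (xk + a • E) ≤ F xk +
      (f' xk ik * a + L / 2 * a ^ 2 + g ik (xk ik + a) - g ik (xk ik)) := by
    intro a
    rw [hF, hF, hsumcoord]
    linarith [key a]
  set Vik : ℝ := f' xk ik * d ik + L / 2 * (d ik) ^ 2 + g ik (xk ik + d ik) - g ik (xk ik)
    with hVik
  have step1 : F xk1 ≤ F xk + Vik := by rw [hstep]; exact FV (d ik)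
  -- set up the comparison point
  set α : ℝ := μ / L with hα
  have hα0 : 0 ≤ α := div_nonneg hμ.le hL.le
  have hα1 : α ≤ 1 := (div_le_one hL).mpr hμL
  set S : ℝ := ∑ j, (xs j - xk j) * (xs j - xk j) with hS
  have hS0 : 0 ≤ S := Finset.sum_nonneg fun j _ => mul_self_nonneg _
  -- strong convexity in coordinates
  have hinner : ⟪f' xk, xs - xk⟫ = ∑ j, f' xk j * (xs j - xk j) := by
    rw [PiLp.inner_apply]
    refine Finset.sum_congr rfl fun j _ => ?_
    have : (xs - xk) j = xs j - xk j := rfl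
    simp [this, RCLike.inner_apply]; ring
  have hnorm : ‖xs - xk‖ ^ 2 = S := by
    rw [← real_inner_self_eq_norm_sq, PiLp.inner_apply, hS]
    refine Finset.sum_congr rfl fun j _ => ?_
    have : (xs - xk) j = xs j - xk j := rfl
    simp [this, RCLike.inner_apply]; ring
  have hsc' : ∑ j, f' xk j * (xs j - xk j) ≤ f xs - f xk - μ / 2 * S := by
    have := hsc xk xs
    rw [hinner, hnorm] at this
    linarith
  -- convexity of each g
  have hgc : ∀ j, g j (xk j + α * (xs j - xk j)) ≤ (1 - α) * g j (xk j) + α * g j (xs j) := by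
    intro j
    have h := (hg j).2 (Set.mem_univ (xk j)) (Set.mem_univ (xs j))
      (by linarith : (0:ℝ) ≤ 1 - α) hα0 (by ring)
    have harg : (1 - α) • xk j + α • xs j = xk j + α * (xs j - xk j) := by
      simp [smul_eq_mul]; ring
    rwa [harg] at h
  -- bound the sum of the coordinate models at the comparison step
  have sumbound : ∑ j, (f' xk j * (α * (xs j - xk j)) + L / 2 * (α * (xs j - xk j)) ^ 2
      + g j (xk j + α * (xs j - xk j)) - g j (xk j)) ≤ α * (F xs - F xk) := by
    have expand : ∑ j, (f' xk j * (α * (xs j - xk j)) + L / 2 * (α * (xs j - xk j)) ^ 2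
        + g j (xk j + α * (xs j - xk j)) - g j (xk j))
        = α * (∑ j, f' xk j * (xs j - xk j)) + (L / 2 * α ^ 2) * S
          + ∑ j, (g j (xk j + α * (xs j - xk j)) - g j (xk j)) := by
      rw [Finset.mul_sum, Finset.mul_sum, ← Finset.sum_add_distrib, ← Finset.sum_add_distrib]
      refine Finset.sum_congr rfl fun j _ => ?_
      ring
    have gbound : ∑ j, (g j (xk j + α * (xs j - xk j)) - g j (xk j))
        ≤ α * (∑ j, g j (xs j) - ∑ j, g j (xk j)) := by
      have h1 : ∑ j, (g j (xk j + α * (xs j - xk j)) - g j (xk j))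
          ≤ ∑ j, (α * g j (xs j) - α * g j (xk j)) := by
        refine Finset.sum_le_sum fun j _ => ?_
        have := hgc j
        nlinarith [hgc j]
      calc ∑ j, (g j (xk j + α * (xs j - xk j)) - g j (xk j))
          ≤ ∑ j, (α * g j (xs j) - α * g j (xk j)) := h1
        _ = α * (∑ j, g j (xs j) - ∑ j, g j (xk j)) := by
            rw [Finset.sum_sub_distrib, ← Finset.mul_sum, ← Finset.mul_sum]; ring
    have hquad : L / 2 * α ^ 2 = α * (μ / 2) := by
      rw [hα]; field_simp
    have hFsplit : F xs - F xk = (f xs - f xk) + (∑ j, g j (xs j) - ∑ j, g j (xk j)) := by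
      rw [hF, hF]; ring
    have h1 : α * (∑ j, f' xk j * (xs j - xk j))
        ≤ α * (f xs - f xk) - α * (μ / 2) * S := by
      calc α * (∑ j, f' xk j * (xs j - xk j))
          ≤ α * (f xs - f xk - μ / 2 * S) := mul_le_mul_of_nonneg_left hsc' hα0
        _ = α * (f xs - f xk) - α * (μ / 2) * S := by ring
    have h2 : α * (F xs - F xk)
        = α * (f xs - f xk) + α * (∑ j, g j (xs j) - ∑ j, g j (xk j)) := by
      rw [hFsplit]; ring
    rw [expand, hquad]
    linarith [h1, gbound, h2]
  -- GS-q rule: n * Vik ≤ sum of all models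
  have hsum1 : (n:ℝ) * Vik ≤ ∑ j, (f' xk j * d j + L / 2 * (d j) ^ 2
      + g j (xk j + d j) - g j (xk j)) := by
    have := Finset.sum_le_sum (fun j (_ : j ∈ Finset.univ) => hik j)
    simp only [Finset.sum_const, Finset.card_univ, Fintype.card_fin, nsmul_eq_mul] at this; rw [hVik]; exact this
  have hsum2 : ∑ j, (f' xk j * d j + L / 2 * (d j) ^ 2 + g j (xk j + d j) - g j (xk j))
      ≤ ∑ j, (f' xk j * (α * (xs j - xk j)) + L / 2 * (α * (xs j - xk j)) ^ 2
        + g j (xk j + α * (xs j - xk j)) - g j (xk j)) :=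
    Finset.sum_le_sum fun j _ => hd j (α * (xs j - xk j))
  have hVikbound : Vik ≤ α * (F xs - F xk) / n := by
    rw [le_div_iff₀ hn]
    calc Vik * n = (n:ℝ) * Vik := by ring
      _ ≤ α * (F xs - F xk) := le_trans hsum1 (le_trans hsum2 sumbound)
  -- conclude
  have hrate : μ / (n * L) = α / n := by
    rw [hα, div_div, mul_comm]
  clear_value Vik α S E
  rw [hrate]
  have e : α * (F xs - F xk) / n = -(α / n * (F xk - F xs)) := by ring
  rw [e] at hVikbound
  have hexp : (1 - α / n) * (F xk - F xs)
      = (F xk - F xs) - α / n * (F xk - F xs) := by ring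
  rw [hexp]
  linarith [step1, hVikbound]
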